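/- arXiv:1810.12374 — 2 statements merged into one kernel-verified Lean document; each statement's English description precedes it below -/
import Mathlib

section
/- For a fixed integer m and integers n₁, n₂ with nⱼ ≥ |m| and nⱼ - |m| even, the integral over r from 0 to 1 of Z_{n₁ m}(r) · Z_{n₂ m}(r) · r dr equals δ_{n₁,n₂} / (2n₁ + 2). -/
open MeasureTheory Real Filter Topology

/-- Bessel function of the first kind of integer order `m`
(via the standard integral representation). -/
noncomputable def besselJ (m : ℤ) (x : ℝ) : ℝ :=
  (1 / (2 * Real.pi)) * ∫ θ in (0:ℝ)..(2 * Real.pi), Real.cos (m * θ - x * Real.sin θ)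

/-- Radial Zernike polynomial `Z_{nm}` for `m : ℤ`, `n ≥ |m|`, `n - |m|` even. -/
noncomputable def Zern (n : ℕ) (m : ℤ) (r : ℝ) : ℝ :=
  ∑ j ∈ Finset.range ((n - m.natAbs) / 2 + 1),
    ((-1 : ℝ) ^ j * (Nat.factorial (n - j) : ℝ) /
      ((Nat.factorial j : ℝ) * (Nat.factorial ((n + m.natAbs) / 2 - j) : ℝ) *
        (Nat.factorial ((n - m.natAbs) / 2 - j) : ℝ))) * r ^ (n - 2 * j)


section ZernikeAux
open Finset Polynomial

lemma lemA (p : ℕ) (x : ℝ) (hx : 0 < x) :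
    ∑ j ∈ range (p+1), (-1:ℝ)^j * (p.choose j) / (x + j)
      = p.factorial / ∏ i ∈ range (p+1), (x + i) := by
  induction p generalizing x with
  | zero => simp
  | succ p ih =>
    have hprod_pos : ∀ (y : ℝ), 0 < y → ∀ n, 0 < ∏ i ∈ range n, (y + i) := by
      intro y hy n
      exact Finset.prod_pos (fun i _ => by positivity)
    have hstep : ∑ j ∈ range (p+1+1), (-1:ℝ)^j * ((p+1).choose j) / (x + j)
        = (∑ j ∈ range (p+1), (-1:ℝ)^j * (p.choose j) / (x + j))
          - ∑ j ∈ range (p+1), (-1:ℝ)^j * (p.choose j) / ((x+1) + j) := by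
      rw [Finset.sum_range_succ' (fun j => (-1:ℝ)^j * ((p+1).choose j) / (x + j)) (p+1)]
      push_cast
      have e1 : ∀ i ∈ range (p+1), (-1:ℝ)^(i+1) * ((p+1).choose (i+1)) / (x + ((i:ℝ)+1))
          = (-1:ℝ)^(i+1) * (p.choose (i+1)) / (x + ((i:ℝ)+1))
            + (-((-1:ℝ)^i * (p.choose i) / ((x+1) + i))) := by
        intro i _
        have hc : ((p+1).choose (i+1) : ℝ) = (p.choose (i+1) : ℝ) + (p.choose i : ℝ) := by
          rw [Nat.choose_succ_succ]; push_cast; ring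
        rw [hc]
        have hne : x + ((i:ℝ)+1) ≠ 0 := by positivity
        field_simp
        ring
      rw [Finset.sum_congr rfl e1, Finset.sum_add_distrib]
      have e2 : ∑ i ∈ range (p+1), (-1:ℝ)^(i+1) * (p.choose (i+1)) / (x + ((i:ℝ)+1))
          = (∑ j ∈ range (p+1), (-1:ℝ)^j * (p.choose j) / (x + j)) - 1/x := by
        have h := Finset.sum_range_succ' (fun j => (-1:ℝ)^j * (p.choose j) / (x + j)) p
        have hlast : (-1:ℝ)^(p+1) * (p.choose (p+1)) / (x + ((p:ℝ)+1)) = 0 := by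
          simp [Nat.choose_eq_zero_of_lt (Nat.lt_succ_self p)]
        have h2 : ∑ i ∈ range (p+1), (-1:ℝ)^(i+1) * (p.choose (i+1)) / (x + ((i:ℝ)+1))
            = ∑ i ∈ range p, (-1:ℝ)^(i+1) * (p.choose (i+1)) / (x + ((i:ℝ)+1)) := by
          rw [Finset.sum_range_succ, hlast, add_zero]
        rw [h2, h]
        simp only [Nat.choose_zero_right, pow_zero, Nat.cast_zero, Nat.cast_one, Nat.cast_add]
        push_cast
        ring
      rw [e2]
      simp only [Nat.choose_zero_right, pow_zero, Nat.cast_zero, Nat.cast_one,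
        Finset.sum_neg_distrib]
      ring
    rw [hstep, ih x hx, ih (x+1) (by linarith)]
    have hcongr : ∏ i ∈ range (p+1), ((x+1) + (i:ℝ))
        = ∏ k ∈ range (p+1), (x + ((k+1:ℕ):ℝ)) :=
      Finset.prod_congr rfl (by intro i _; push_cast; ring)
    have h1 : ∏ i ∈ range (p+1), ((x+1) + (i:ℝ)) = (∏ i ∈ range (p+1+1), (x + i)) / x := by
      rw [eq_div_iff (ne_of_gt hx), Finset.prod_range_succ' (fun i => x + (i:ℝ)) (p+1), hcongr]
      norm_num
    have h2 : ∏ i ∈ range (p+1), (x + (i:ℝ))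
        = (∏ i ∈ range (p+1+1), (x + i)) / (x + ((p:ℝ)+1)) := by
      rw [eq_div_iff (by positivity), Finset.prod_range_succ (fun i => x + (i:ℝ)) (p+1)]
      push_cast; ring
    have hP2 : 0 < ∏ i ∈ range (p+1+1), (x + i) := hprod_pos x hx (p+1+1)
    rw [h1, h2, Nat.factorial_succ]
    have hne : (x + ((p:ℝ)+1)) ≠ 0 := by positivity
    field_simp
    push_cast
    ring
open Finset

lemma lemB_mono : ∀ (N d : ℕ), d < N →
    ∑ j ∈ range (N+1), (-1:ℝ)^j * (N.choose j) * (j:ℝ)^d = 0 := by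
  intro N
  induction N with
  | zero => intro d hd; omega
  | succ N ih =>
    intro d hd
    match d with
    | 0 =>
      have h : ∑ j ∈ range (N+1+1), (-1:ℝ)^j * ((N+1).choose j)
          = if N+1 = 0 then 1 else 0 := by
        exact_mod_cast Int.alternating_sum_range_choose (n := N+1)
      simp only [Nat.succ_ne_zero, if_false] at h
      simpa [pow_zero] using h
    | e+1 =>
      -- peel j = 0 (term is 0), then use (i+1)*C(N+1,i+1) = (N+1)*C(N,i)
      rw [Finset.sum_range_succ' (fun j => (-1:ℝ)^j * ((N+1).choose j) * (j:ℝ)^(e+1)) (N+1)]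
      have hz : (-1:ℝ)^0 * ((N+1).choose 0) * ((0:ℕ):ℝ)^(e+1) = 0 := by simp
      rw [hz, add_zero]
      have key : ∀ i, (((N+1).choose (i+1) : ℝ)) * ((i:ℝ)+1) = (N+1) * (N.choose i) := by
        intro i
        have := Nat.add_one_mul_choose_eq N i
        have : ((N+1) * N.choose i : ℕ) = ((N+1).choose (i+1) * (i+1) : ℕ) := this
        exact_mod_cast congrArg (Nat.cast (R := ℝ)) this.symm
      have e1 : ∀ i ∈ range (N+1), (-1:ℝ)^(i+1) * ((N+1).choose (i+1)) * ((i+1:ℕ):ℝ)^(e+1)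
          = -((N:ℝ)+1) * ((-1:ℝ)^i * (N.choose i) * ((i:ℝ)+1)^e) := by
        intro i _
        have h2 : ((i+1:ℕ):ℝ)^(e+1) = ((i:ℝ)+1)^e * ((i:ℝ)+1) := by push_cast; ring
        rw [h2, pow_succ]
        linear_combination (-(-1:ℝ)^i * ((i:ℝ)+1)^e) * key i
      rw [Finset.sum_congr rfl e1, ← Finset.mul_sum]
      have e2 : ∑ i ∈ range (N+1), (-1:ℝ)^i * (N.choose i) * ((i:ℝ)+1)^e = 0 := by
        have expand : ∀ i : ℕ, ((i:ℝ)+1)^e = ∑ t ∈ range (e+1), (e.choose t) * (i:ℝ)^t := by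
          intro i
          rw [add_pow]
          apply Finset.sum_congr rfl
          intro t _
          ring
        calc ∑ i ∈ range (N+1), (-1:ℝ)^i * (N.choose i) * ((i:ℝ)+1)^e
            = ∑ i ∈ range (N+1), ∑ t ∈ range (e+1),
                (e.choose t) * ((-1:ℝ)^i * (N.choose i) * (i:ℝ)^t) := by
              apply Finset.sum_congr rfl
              intro i _
              rw [expand i, Finset.mul_sum]
              apply Finset.sum_congr rfl
              intro t _
              ring
          _ = ∑ t ∈ range (e+1), (e.choose t : ℝ) *
                ∑ i ∈ range (N+1), (-1:ℝ)^i * (N.choose i) * (i:ℝ)^t := by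
              rw [Finset.sum_comm]
              apply Finset.sum_congr rfl
              intro t _
              rw [Finset.mul_sum]
          _ = 0 := by
              apply Finset.sum_eq_zero
              intro t ht
              rw [ih t (by simp at ht; omega)]
              ring
      rw [e2, mul_zero]

lemma lemB (N : ℕ) (Q : Polynomial ℝ) (hQ : Q.natDegree < N) :
    ∑ j ∈ range (N+1), (-1:ℝ)^j * (N.choose j) * Q.eval (j:ℝ) = 0 := by
  have expand : ∀ j : ℕ, Q.eval (j:ℝ)
      = ∑ d ∈ range (Q.natDegree + 1), Q.coeff d * (j:ℝ)^d := fun j =>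
    Polynomial.eval_eq_sum_range _
  calc ∑ j ∈ range (N+1), (-1:ℝ)^j * (N.choose j) * Q.eval (j:ℝ)
      = ∑ j ∈ range (N+1), ∑ d ∈ range (Q.natDegree + 1),
          Q.coeff d * ((-1:ℝ)^j * (N.choose j) * (j:ℝ)^d) := by
        apply Finset.sum_congr rfl
        intro j _
        rw [expand j, Finset.mul_sum]
        apply Finset.sum_congr rfl
        intro d _
        ring
    _ = ∑ d ∈ range (Q.natDegree + 1), Q.coeff d *
          ∑ j ∈ range (N+1), (-1:ℝ)^j * (N.choose j) * (j:ℝ)^d := by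
        rw [Finset.sum_comm]
        apply Finset.sum_congr rfl
        intro d _
        rw [Finset.mul_sum]
    _ = 0 := by
        apply Finset.sum_eq_zero
        intro d hd
        rw [lemB_mono N d (by simp at hd; omega), mul_zero]

lemma prodC1 (A t : ℕ) : ∏ i ∈ range t, ((A:ℝ)+1+i) = ((A+t).factorial : ℝ) / (A.factorial : ℝ) := by
  induction t with
  | zero => simp [div_self (Nat.cast_ne_zero.mpr (Nat.factorial_ne_zero _) : ((Nat.factorial _ : ℕ):ℝ) ≠ 0)]
  | succ t ih =>
    rw [Finset.prod_range_succ, ih]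
    have hfa : ((A.factorial : ℝ)) ≠ 0 := Nat.cast_ne_zero.mpr (Nat.factorial_ne_zero A)
    have h : ((A + (t+1)).factorial : ℝ) = ((A:ℝ)+t+1) * ((A+t).factorial : ℝ) := by
      have : A + (t+1) = (A+t) + 1 := rfl
      rw [this, Nat.factorial_succ]
      push_cast; ring
    rw [h]
    field_simp
    ring

lemma prodC2 (q t : ℕ) (h : t ≤ q) :
    ∏ i ∈ range t, ((q:ℝ) - i) = (q.factorial : ℝ) / ((q-t).factorial : ℝ) := by
  induction t with
  | zero => simp [div_self (Nat.cast_ne_zero.mpr (Nat.factorial_ne_zero _) : ((Nat.factorial _ : ℕ):ℝ) ≠ 0)]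
  | succ t ih =>
    have ht : t ≤ q := le_of_lt h
    rw [Finset.prod_range_succ, ih ht]
    have h1 : (q - t) = (q - (t+1)) + 1 := by omega
    have h2 : ((q-t).factorial : ℝ) = ((q:ℝ) - t) * ((q-(t+1)).factorial : ℝ) := by
      rw [h1, Nat.factorial_succ]
      have hc : ((q - (t+1) + 1 : ℕ) : ℝ) = (q:ℝ) - t := by
        have h3 : q - (t+1) + 1 = q - t := by omega
        rw [h3, Nat.cast_sub ht]
      rw [Nat.cast_mul, hc]
    have hq : ((q:ℝ) - t) ≠ 0 := by
      have : ((q - t : ℕ):ℝ) = (q:ℝ) - t := Nat.cast_sub ht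
      rw [← this]
      exact_mod_cast Nat.sub_ne_zero_of_lt h
    have hf2 : ((q-(t+1)).factorial : ℝ) ≠ 0 := Nat.cast_ne_zero.mpr (Nat.factorial_ne_zero _)
    rw [h2]
    field_simp

lemma lemJ (a p q : ℕ) :
    ∑ j ∈ range (p+1), (-1:ℝ)^j * ((a+2*p-j).factorial : ℝ) /
        ((j.factorial : ℝ) * ((p-j).factorial : ℝ) * ((a+p-j).factorial : ℝ))
        * (1/(2*((a:ℝ)+p+q+1-j)))
      = if p ≤ q then ((q.factorial : ℝ) * ((a+q).factorial : ℝ)) /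
          (2 * ((q-p).factorial : ℝ) * ((a+p+q+1).factorial : ℝ)) else 0 := by
  classical
  -- the polynomial P(X) = ∏_{i<p} (a+p+1+i - X)
  set B : ℝ := (a:ℝ)+p+q+1 with hB
  set Pp : Polynomial ℝ := ∏ i ∈ range p, (Polynomial.C ((a:ℝ)+p+1+i) - Polynomial.X) with hPp
  have hPeval : ∀ t : ℝ, Pp.eval t = ∏ i ∈ range p, ((a:ℝ)+p+1+i - t) := by
    intro t
    rw [hPp, Polynomial.eval_prod]
    apply Finset.prod_congr rfl
    intro i _
    simp
  set v : ℝ := Pp.eval B with hv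
  obtain ⟨Qq, hfac⟩ : (Polynomial.X - Polynomial.C B) ∣ (Pp - Polynomial.C v) := by
    rw [Polynomial.dvd_iff_isRoot]
    simp [Polynomial.IsRoot, hv]
  have hQeval : ∀ t : ℝ, Pp.eval t = v + (t - B) * Qq.eval t := by
    intro t
    have := congrArg (Polynomial.eval t) hfac
    simp at this
    linarith [this]
  -- value of v
  have hveq : v = ∏ i ∈ range p, ((i:ℝ) - q) := by
    rw [hv, hPeval]
    apply Finset.prod_congr rfl
    intro i _
    rw [hB]; ring
  -- term rewrite
  have hterm : ∀ j ∈ range (p+1),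
      (-1:ℝ)^j * ((a+2*p-j).factorial : ℝ) /
        ((j.factorial : ℝ) * ((p-j).factorial : ℝ) * ((a+p-j).factorial : ℝ))
        * (1/(2*((a:ℝ)+p+q+1-j)))
      = (1/(2*(p.factorial:ℝ))) *
          ((-1:ℝ)^j * (p.choose j) * (v / (B - j)) - (-1:ℝ)^j * (p.choose j) * Qq.eval (j:ℝ)) := by
    intro j hj
    have hjp : j ≤ p := by simp at hj; omega
    have hBj : B - (j:ℝ) = ((a+p+q+1-j : ℕ):ℝ) := by
      rw [hB, Nat.cast_sub (by omega)]
      push_cast; ring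
    have hBjne : B - (j:ℝ) ≠ 0 := by
      rw [hBj]
      have : 0 < a+p+q+1-j := by omega
      exact_mod_cast this.ne'
    have hPj : Pp.eval (j:ℝ) = ((a+2*p-j).factorial : ℝ) / ((a+p-j).factorial : ℝ) := by
      rw [hPeval]
      have : ∀ i ∈ range p, (a:ℝ)+p+1+i - j = ((a+p-j : ℕ):ℝ)+1+i := by
        intro i _
        rw [Nat.cast_sub (by omega)]
        push_cast; ring
      rw [Finset.prod_congr rfl this, prodC1]
      have h4 : a+p-j+p = a+2*p-j := by omega
      rw [h4]
    have hchoose : ((p.choose j : ℕ):ℝ) * ((j.factorial : ℝ) * ((p-j).factorial : ℝ))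
        = (p.factorial : ℝ) := by
      rw [← mul_assoc]
      exact_mod_cast congrArg (Nat.cast (R := ℝ)) (Nat.choose_mul_factorial_mul_factorial hjp)
    have hPQ : Pp.eval (j:ℝ) / (B - j) = v / (B - j) - Qq.eval (j:ℝ) := by
      rw [hQeval (j:ℝ)]
      field_simp
      ring
    have hfj : (j.factorial : ℝ) ≠ 0 := Nat.cast_ne_zero.mpr (Nat.factorial_ne_zero _)
    have hfpj : ((p-j).factorial : ℝ) ≠ 0 := Nat.cast_ne_zero.mpr (Nat.factorial_ne_zero _)
    have hfapj : ((a+p-j).factorial : ℝ) ≠ 0 := Nat.cast_ne_zero.mpr (Nat.factorial_ne_zero _)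
    have hfp : (p.factorial : ℝ) ≠ 0 := Nat.cast_ne_zero.mpr (Nat.factorial_ne_zero _)
    have hBj2 : (a:ℝ)+p+q+1-j = B - j := by rw [hB]
    have h6 : ((p.choose j : ℕ):ℝ)
        = (p.factorial : ℝ) / ((j.factorial : ℝ) * ((p-j).factorial : ℝ)) :=
      (eq_div_iff (by positivity)).mpr hchoose
    have key : ((a+2*p-j).factorial : ℝ) = Pp.eval (j:ℝ) * ((a+p-j).factorial : ℝ) := by
      rw [hPj]; field_simp
    have hRHS : (1/(2*(p.factorial:ℝ))) *
          ((-1:ℝ)^j * (p.choose j) * (v / (B - j)) - (-1:ℝ)^j * (p.choose j) * Qq.eval (j:ℝ))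
        = (1/(2*(p.factorial:ℝ))) * ((-1:ℝ)^j * (p.choose j) * (Pp.eval (j:ℝ) / (B - j))) := by
      rw [hPQ]; ring
    rw [hBj2, hRHS, key, h6]
    field_simp
  -- assemble
  rw [Finset.sum_congr rfl hterm, ← Finset.mul_sum, Finset.sum_sub_distrib]
  have hfp : (p.factorial : ℝ) ≠ 0 := Nat.cast_ne_zero.mpr (Nat.factorial_ne_zero _)
  have hY : ∑ j ∈ range (p+1), (-1:ℝ)^j * (p.choose j) * Qq.eval (j:ℝ) = 0 := by
    rcases eq_or_ne Qq 0 with h0|h0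
    · simp [h0]
    · have hPdeg : Pp.natDegree = p := by
        rw [hPp, Polynomial.natDegree_prod]
        · have : ∀ i ∈ range p,
              (Polynomial.C ((a:ℝ)+p+1+i) - Polynomial.X).natDegree = 1 := by
            intro i _
            rw [show Polynomial.C ((a:ℝ)+p+1+(i:ℝ)) - Polynomial.X
                = -(Polynomial.X - Polynomial.C ((a:ℝ)+p+1+(i:ℝ))) by ring]
            rw [Polynomial.natDegree_neg, Polynomial.natDegree_X_sub_C]
          rw [Finset.sum_congr rfl this, Finset.sum_const, card_range, smul_eq_mul, mul_one]
        · intro i _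
          rw [show Polynomial.C ((a:ℝ)+p+1+(i:ℝ)) - Polynomial.X
              = -(Polynomial.X - Polynomial.C ((a:ℝ)+p+1+(i:ℝ))) by ring]
          exact neg_ne_zero.mpr (Polynomial.X_sub_C_ne_zero _)
      have hdeg2 : (Pp - Polynomial.C v).natDegree = p := by
        rw [Polynomial.natDegree_sub_C, hPdeg]
      have hdeg3 : (Pp - Polynomial.C v).natDegree = 1 + Qq.natDegree := by
        rw [hfac, Polynomial.natDegree_mul (Polynomial.X_sub_C_ne_zero _) h0,
          Polynomial.natDegree_X_sub_C]
      exact lemB p Qq (by omega)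
  rw [hY, sub_zero]
  have hX : ∑ j ∈ range (p+1), (-1:ℝ)^j * (p.choose j) * (v/(B - j))
      = v * ∑ j ∈ range (p+1), (-1:ℝ)^j * (p.choose j)/(B - j) := by
    rw [Finset.mul_sum]
    exact Finset.sum_congr rfl (by intro j _; ring)
  have hreflect : ∑ j ∈ range (p+1), (-1:ℝ)^j * (p.choose j) / (B - j)
      = (-1:ℝ)^p * ∑ j ∈ range (p+1), (-1:ℝ)^j * (p.choose j) / (((a:ℝ)+q+1) + j) := by
    rw [← Finset.sum_range_reflect (fun j => (-1:ℝ)^j * (p.choose j) / (B - j)) (p+1),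
      Finset.mul_sum]
    apply Finset.sum_congr rfl
    intro j hj
    have hjp : j ≤ p := by simp at hj; omega
    have e0 : p + 1 - 1 - j = p - j := by omega
    rw [e0]
    have hsq : ((-1:ℝ)^j) * ((-1:ℝ)^j) = 1 := by
      rw [← pow_add, ← two_mul, pow_mul]; norm_num
    have h1 : ((-1:ℝ))^(p-j) = (-1:ℝ)^p * (-1:ℝ)^j := by
      have : ((-1:ℝ))^p = (-1:ℝ)^(p-j) * (-1:ℝ)^j := by
        rw [← pow_add]; congr 1; omega
      rw [this, mul_assoc, hsq, mul_one]
    have h2 : (p.choose (p-j) : ℝ) = (p.choose j : ℝ) := by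
      exact_mod_cast congrArg (Nat.cast (R := ℝ)) (Nat.choose_symm hjp)
    have h3 : B - ((p-j : ℕ):ℝ) = ((a:ℝ)+q+1) + j := by
      rw [Nat.cast_sub hjp, hB]; ring
    rw [h1, h2, h3]
    ring
  have hprod : ∏ i ∈ range (p+1), (((a:ℝ)+q+1) + i)
      = ((a+p+q+1).factorial : ℝ) / ((a+q).factorial : ℝ) := by
    have e : ∀ i ∈ range (p+1), ((a:ℝ)+q+1) + i = ((a+q : ℕ):ℝ)+1+i := by
      intro i _; push_cast; ring
    rw [Finset.prod_congr rfl e, prodC1]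
    have : a+q+(p+1) = a+p+q+1 := by omega
    rw [this]
  rw [hX, hreflect, lemA p ((a:ℝ)+q+1) (by positivity), hprod]
  have hfaq : ((a+q).factorial : ℝ) ≠ 0 := Nat.cast_ne_zero.mpr (Nat.factorial_ne_zero _)
  have hfapq : ((a+p+q+1).factorial : ℝ) ≠ 0 := Nat.cast_ne_zero.mpr (Nat.factorial_ne_zero _)
  have hsgnp : ((-1:ℝ)^p) * ((-1:ℝ)^p) = 1 := by
    rw [← pow_add, ← two_mul, pow_mul]; norm_num
  by_cases h : p ≤ q
  · rw [if_pos h]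
    have hv2 : v = (-1:ℝ)^p * ((q.factorial:ℝ)/((q-p).factorial:ℝ)) := by
      rw [hveq, ← prodC2 q p h]
      rw [show ∏ i ∈ range p, ((i:ℝ) - q) = ∏ i ∈ range p, (-1) * ((q:ℝ) - i) from
        Finset.prod_congr rfl (by intro i _; ring)]
      rw [Finset.prod_mul_distrib, Finset.prod_const, card_range]
    rw [hv2]
    have hfqp : ((q-p).factorial : ℝ) ≠ 0 := Nat.cast_ne_zero.mpr (Nat.factorial_ne_zero _)
    have hd : ((-1:ℝ))^p = 1 ∨ ((-1:ℝ))^p = -1 := by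
      rcases Nat.even_or_odd p with hpe | hpe
      · exact Or.inl hpe.neg_one_pow
      · exact Or.inr hpe.neg_one_pow
    field_simp
    linear_combination hsgnp
  · rw [if_neg h]
    have hv0 : v = 0 := by
      rw [hveq]
      apply Finset.prod_eq_zero (Finset.mem_range.mpr (by omega : q < p))
      simp
    rw [hv0]
    ring

noncomputable def zc (a p j : ℕ) : ℝ :=
  (-1:ℝ)^j * ((a+2*p-j).factorial : ℝ) /
    ((j.factorial : ℝ) * ((a+p-j).factorial : ℝ) * ((p-j).factorial : ℝ))

lemma main_aux (a p q : ℕ) (hpq : p ≤ q) :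
    ∫ r in (0:ℝ)..1, (∑ j ∈ range (p+1), zc a p j * r^(a+2*(p-j))) *
        (∑ k ∈ range (q+1), zc a q k * r^(a+2*(q-k))) * r
      = (if p = q then (1:ℝ) else 0) / (2*(a:ℝ)+4*(p:ℝ)+2) := by
  classical
  have h1 : ∀ r:ℝ, (∑ j ∈ range (p+1), zc a p j * r^(a+2*(p-j))) *
      (∑ k ∈ range (q+1), zc a q k * r^(a+2*(q-k))) * r
      = ∑ j ∈ range (p+1), ∑ k ∈ range (q+1),
          (zc a p j * zc a q k) * r^((a+2*(p-j)) + (a+2*(q-k)) + 1) := by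
    intro r
    rw [Finset.sum_mul_sum, Finset.sum_mul]
    apply Finset.sum_congr rfl; intro j _
    rw [Finset.sum_mul]
    apply Finset.sum_congr rfl; intro k _
    ring
  have hInt : ∫ r in (0:ℝ)..1, (∑ j ∈ range (p+1), zc a p j * r^(a+2*(p-j))) *
      (∑ k ∈ range (q+1), zc a q k * r^(a+2*(q-k))) * r
      = ∑ j ∈ range (p+1), ∑ k ∈ range (q+1),
          (zc a p j * zc a q k) * (1 / (((a+2*(p-j)) + (a+2*(q-k)) + 2 : ℕ):ℝ)) := by
    rw [intervalIntegral.integral_congr (g := fun r => ∑ j ∈ range (p+1), ∑ k ∈ range (q+1),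
          (zc a p j * zc a q k) * r^((a+2*(p-j)) + (a+2*(q-k)) + 1))
        (fun r _ => h1 r)]
    rw [intervalIntegral.integral_finset_sum]
    · apply Finset.sum_congr rfl; intro j _
      rw [intervalIntegral.integral_finset_sum]
      · apply Finset.sum_congr rfl; intro k _
        rw [intervalIntegral.integral_const_mul, integral_pow, one_pow,
          zero_pow (by omega : (a+2*(p-j)) + (a+2*(q-k)) + 1 + 1 ≠ 0)]
        push_cast
        ring
      · intro k _
        exact (Continuous.mul continuous_const (continuous_pow _)).intervalIntegrable 0 1
    · intro j _
      apply Continuous.intervalIntegrable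
      apply continuous_finset_sum
      intro k _
      exact Continuous.mul continuous_const (continuous_pow _)
  rw [hInt, Finset.sum_comm]
  -- inner sums via lemJ
  have h2 : ∀ k ∈ range (q+1), ∑ j ∈ range (p+1),
      (zc a p j * zc a q k) * (1 / (((a+2*(p-j)) + (a+2*(q-k)) + 2 : ℕ):ℝ))
      = zc a q k * (if p ≤ q-k then (((q-k).factorial : ℝ) * ((a+(q-k)).factorial : ℝ)) /
          (2 * (((q-k)-p).factorial : ℝ) * ((a+p+(q-k)+1).factorial : ℝ)) else 0) := by
    intro k hk
    have hkq : k ≤ q := by simp at hk; omega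
    rw [← lemJ a p (q-k), Finset.mul_sum]
    apply Finset.sum_congr rfl
    intro j hj
    have hjp : j ≤ p := by simp at hj; omega
    have hcast : (((a+2*(p-j)) + (a+2*(q-k)) + 2 : ℕ):ℝ)
        = 2*((a:ℝ)+(p:ℝ)+((q-k:ℕ):ℝ)+1-(j:ℝ)) := by
      push_cast [Nat.cast_sub hjp, Nat.cast_sub hkq]
      ring
    rw [hcast]
    unfold zc
    ring
  rw [Finset.sum_congr rfl h2]
  by_cases hpq2 : p = q
  · subst hpq2
    rw [if_pos rfl]
    rw [Finset.sum_eq_single_of_mem 0 (Finset.mem_range.mpr (by omega))]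
    · have e0 : p - 0 = p := rfl
      have e1 : a + (p - 0) = a + p := rfl
      simp only [Nat.sub_zero]
      rw [if_pos le_rfl]
      have e2 : p - p = 0 := by omega
      rw [e2]
      unfold zc
      have hfp : ((p.factorial : ℕ):ℝ) ≠ 0 := Nat.cast_ne_zero.mpr (Nat.factorial_ne_zero _)
      have hfap : (((a+p).factorial : ℕ):ℝ) ≠ 0 := Nat.cast_ne_zero.mpr (Nat.factorial_ne_zero _)
      have hfa2p : (((a+2*p).factorial : ℕ):ℝ) ≠ 0 := Nat.cast_ne_zero.mpr (Nat.factorial_ne_zero _)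
      have hsucc : (((a+p+p+1).factorial : ℕ):ℝ) = ((a+p+p+1:ℕ):ℝ) * ((a+2*p).factorial : ℝ) := by
        have : a+p+p+1 = (a+2*p)+1 := by omega
        rw [this, Nat.factorial_succ]
        push_cast
        ring
      rw [hsucc]
      have hne : ((a+p+p+1:ℕ):ℝ) ≠ 0 := by positivity
      simp only [Nat.sub_zero, Nat.factorial_zero]
      field_simp
      push_cast
      ring
    · intro k hk hk0
      have hkq : k ≤ p := by simp at hk; omega
      rw [if_neg (by omega), mul_zero]
  · rw [if_neg hpq2]
    have hplt : p < q := lt_of_le_of_ne hpq hpq2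
    set N := q - p with hN
    have hN1 : 1 ≤ N := by omega
    -- restrict the sum to k ≤ N
    rw [← Finset.sum_subset (Finset.range_subset_range.mpr (by omega : N+1 ≤ q+1))
        (by
          intro k hk hk2
          have hkq : k ≤ q := by simp at hk; omega
          have : ¬ (p ≤ q - k) := by simp at hk2; omega
          rw [if_neg this, mul_zero])]
    -- identify with lemB sum
    set R : Polynomial ℝ := ∏ i ∈ range (N-1), (Polynomial.C (((a+p+q+2+i:ℕ)):ℝ) - Polynomial.X)
      with hR
    have hReval : ∀ t : ℝ, R.eval t = ∏ i ∈ range (N-1), (((a+p+q+2+i:ℕ):ℝ) - t) := by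
      intro t
      rw [hR, Polynomial.eval_prod]
      apply Finset.prod_congr rfl
      intro i _
      simp
    have hterm2 : ∀ k ∈ range (N+1),
        zc a q k * (if p ≤ q-k then (((q-k).factorial : ℝ) * ((a+(q-k)).factorial : ℝ)) /
          (2 * (((q-k)-p).factorial : ℝ) * ((a+p+(q-k)+1).factorial : ℝ)) else 0)
        = (1/(2*(N.factorial:ℝ))) * ((-1:ℝ)^k * (N.choose k) * R.eval (k:ℝ)) := by
      intro k hk
      have hkN : k ≤ N := by simp at hk; omega
      have hple : p ≤ q - k := by omega
      rw [if_pos hple]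
      have hRk : R.eval (k:ℝ) = ((a+2*q-k).factorial : ℝ) / ((a+p+q+1-k).factorial : ℝ) := by
        rw [hReval]
        have e : ∀ i ∈ range (N-1), ((a+p+q+2+i:ℕ):ℝ) - (k:ℝ) = ((a+p+q+1-k : ℕ):ℝ)+1+i := by
          intro i _
          rw [Nat.cast_sub (by omega)]
          push_cast
          ring
        rw [Finset.prod_congr rfl e, prodC1]
        have e2 : a+p+q+1-k + (N-1) = a+2*q-k := by omega
        rw [e2]
      rw [hRk]
      have hch : ((N.choose k : ℕ):ℝ) = (N.factorial : ℝ) /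
          ((k.factorial : ℝ) * ((N-k).factorial : ℝ)) := by
        rw [eq_div_iff (by positivity), ← mul_assoc]
        exact_mod_cast congrArg (Nat.cast (R := ℝ)) (Nat.choose_mul_factorial_mul_factorial hkN)
      rw [hch]
      unfold zc
      -- rewrite nat-sub expressions
      have e3 : a+(q-k) = a+q-k := by omega
      have e4 : (q-k)-p = N-k := by omega
      have e5 : a+p+(q-k)+1 = a+p+q+1-k := by omega
      have e6 : a+2*q-k = a+2*q-k := rfl
      rw [e3, e4, e5]
      have f1 : (((q-k).factorial : ℕ):ℝ) ≠ 0 := Nat.cast_ne_zero.mpr (Nat.factorial_ne_zero _)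
      have f2 : (((a+q-k).factorial : ℕ):ℝ) ≠ 0 := Nat.cast_ne_zero.mpr (Nat.factorial_ne_zero _)
      have f3 : (((N-k).factorial : ℕ):ℝ) ≠ 0 := Nat.cast_ne_zero.mpr (Nat.factorial_ne_zero _)
      have f4 : (((a+p+q+1-k).factorial : ℕ):ℝ) ≠ 0 := Nat.cast_ne_zero.mpr (Nat.factorial_ne_zero _)
      have f5 : ((k.factorial : ℕ):ℝ) ≠ 0 := Nat.cast_ne_zero.mpr (Nat.factorial_ne_zero _)
      have f6 : ((N.factorial : ℕ):ℝ) ≠ 0 := Nat.cast_ne_zero.mpr (Nat.factorial_ne_zero _)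
      field_simp
    rw [Finset.sum_congr rfl hterm2, ← Finset.mul_sum]
    have hdeg : R.natDegree < N := by
      have : R.natDegree = N-1 := by
        rw [hR, Polynomial.natDegree_prod]
        · have e : ∀ i ∈ range (N-1),
              (Polynomial.C (((a+p+q+2+i:ℕ)):ℝ) - Polynomial.X).natDegree = 1 := by
            intro i _
            rw [show Polynomial.C (((a+p+q+2+i:ℕ)):ℝ) - Polynomial.X
                = -(Polynomial.X - Polynomial.C (((a+p+q+2+i:ℕ)):ℝ)) by ring]
            rw [Polynomial.natDegree_neg, Polynomial.natDegree_X_sub_C]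
          rw [Finset.sum_congr rfl e, Finset.sum_const, card_range, smul_eq_mul, mul_one]
        · intro i _
          rw [show Polynomial.C (((a+p+q+2+i:ℕ)):ℝ) - Polynomial.X
              = -(Polynomial.X - Polynomial.C (((a+p+q+2+i:ℕ)):ℝ)) by ring]
          exact neg_ne_zero.mpr (Polynomial.X_sub_C_ne_zero _)
      omega
    rw [lemB N R hdeg, mul_zero, zero_div]


lemma Zern_eq (m : ℤ) (p : ℕ) (r : ℝ) :
    Zern (m.natAbs + 2*p) m r
      = ∑ j ∈ range (p+1), zc m.natAbs p j * r^(m.natAbs + 2*(p-j)) := by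
  unfold Zern zc
  have h1 : (m.natAbs + 2*p - m.natAbs)/2 = p := by omega
  rw [h1]
  apply Finset.sum_congr rfl
  intro j hj
  have hjp : j ≤ p := by simp at hj; omega
  have e1 : (m.natAbs + 2*p + m.natAbs)/2 - j = m.natAbs + p - j := by omega
  have e2 : m.natAbs + 2*p - 2*j = m.natAbs + 2*(p-j) := by omega
  rw [e1, e2]


end ZernikeAux

open Finset in
theorem zernike_orthogonality (m : ℤ) (n₁ n₂ : ℕ)
    (h₁ : m.natAbs ≤ n₁) (h₂ : (n₁ - m.natAbs) % 2 = 0)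
    (h₃ : m.natAbs ≤ n₂) (h₄ : (n₂ - m.natAbs) % 2 = 0) :
    ∫ r in (0:ℝ)..1, Zern n₁ m r * Zern n₂ m r * r
      = (if n₁ = n₂ then (1:ℝ) else 0) / (2 * n₁ + 2) := by
  obtain ⟨p, hp⟩ : ∃ p, n₁ = m.natAbs + 2*p := ⟨(n₁ - m.natAbs)/2, by omega⟩
  obtain ⟨q, hq⟩ : ∃ q, n₂ = m.natAbs + 2*q := ⟨(n₂ - m.natAbs)/2, by omega⟩
  subst hp hq
  set a := m.natAbs with ha
  by_cases hpq : p ≤ q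
  · have key := main_aux a p q hpq
    calc ∫ r in (0:ℝ)..1, Zern (a+2*p) m r * Zern (a+2*q) m r * r
        = ∫ r in (0:ℝ)..1, (∑ j ∈ range (p+1), zc a p j * r^(a+2*(p-j))) *
            (∑ k ∈ range (q+1), zc a q k * r^(a+2*(q-k))) * r := by
          apply intervalIntegral.integral_congr
          intro r _
          simp only [ha, Zern_eq]
      _ = (if p = q then (1:ℝ) else 0) / (2*(a:ℝ)+4*(p:ℝ)+2) := key
      _ = (if a+2*p = a+2*q then (1:ℝ) else 0) / (2 * ((a+2*p : ℕ):ℝ) + 2) := by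
          congr 1
          · congr 1
            simp only [eq_iff_iff]
            omega
          · push_cast; ring
  · have hqp : q ≤ p := le_of_not_ge hpq
    have key := main_aux a q p hqp
    have hne : ¬ (a+2*p = a+2*q) := by omega
    have hne2 : ¬ (q = p) := by omega
    calc ∫ r in (0:ℝ)..1, Zern (a+2*p) m r * Zern (a+2*q) m r * r
        = ∫ r in (0:ℝ)..1, (∑ j ∈ range (q+1), zc a q j * r^(a+2*(q-j))) *
            (∑ k ∈ range (p+1), zc a p k * r^(a+2*(p-k))) * r := by
          apply intervalIntegral.integral_congr
          intro r _
          simp only [ha, Zern_eq]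
          ring
      _ = (if q = p then (1:ℝ) else 0) / (2*(a:ℝ)+4*(q:ℝ)+2) := key
      _ = (if a+2*p = a+2*q then (1:ℝ) else 0) / (2 * ((a+2*p : ℕ):ℝ) + 2) := by
          rw [if_neg hne, if_neg hne2]
          simp
end

section
/- For a > 0, integers m and n with n ≥ |m| and n - |m| even, and nonzero real α, the integral over r from 0 to a of Z_{nm}(r/a) · J_m(αr) · r dr equals a · (-1)^{(n-m)/2} · J_{n+1}(aα)/α. -/
open MeasureTheory Real Filter Topology

open Finset intervalIntegral

lemma besselJ_cont_aux (q : ℤ) (x : ℝ) : Continuous (fun θ : ℝ => Real.cos (q * θ - x * Real.sin θ)) := by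
  fun_prop

lemma besselJ_hasDerivAt (q : ℤ) (x : ℝ) :
    HasDerivAt (besselJ q) ((besselJ (q-1) x - besselJ (q+1) x) / 2) x := by
  have key : HasDerivAt (fun y => ∫ θ in (0:ℝ)..(2*Real.pi), Real.cos (q * θ - y * Real.sin θ))
      (∫ θ in (0:ℝ)..(2*Real.pi), Real.sin θ * Real.sin (q * θ - x * Real.sin θ)) x := by
    have := intervalIntegral.hasDerivAt_integral_of_dominated_loc_of_deriv_le
      (F := fun y θ => Real.cos (q * θ - y * Real.sin θ))
      (F' := fun y θ => Real.sin θ * Real.sin (q * θ - y * Real.sin θ))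
      (a := 0) (b := 2*Real.pi) (μ := volume) (x₀ := x) (bound := fun _ => 1)
      (s := Metric.ball x 1) (Metric.ball_mem_nhds x one_pos)
      (Filter.Eventually.of_forall (fun y => (Continuous.aestronglyMeasurable (besselJ_cont_aux q y))))
      ((besselJ_cont_aux q x).intervalIntegrable 0 (2*Real.pi))
      (Continuous.aestronglyMeasurable (by fun_prop))
      (ae_of_all _ (fun θ _ y _ => by
        calc ‖Real.sin θ * Real.sin (q * θ - y * Real.sin θ)‖
            = |Real.sin θ| * |Real.sin (q * θ - y * Real.sin θ)| := abs_mul _ _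
          _ ≤ 1 * 1 := mul_le_mul (abs_sin_le_one θ) (abs_sin_le_one _) (abs_nonneg _) zero_le_one
          _ = 1 := one_mul 1))
      (intervalIntegrable_const)
      (ae_of_all _ (fun θ _ y _ => by
        have h1 : HasDerivAt (fun y : ℝ => (q:ℝ) * θ - y * Real.sin θ) (-Real.sin θ) y := by
          simpa using ((hasDerivAt_id y).mul_const (Real.sin θ)).const_sub ((q:ℝ)*θ)
        simpa [neg_mul, mul_comm] using h1.cos))
    exact this.2
  have hsplit : (∫ θ in (0:ℝ)..(2*Real.pi), Real.sin θ * Real.sin (q * θ - x * Real.sin θ))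
      = ((∫ θ in (0:ℝ)..(2*Real.pi), Real.cos ((q-1 : ℤ) * θ - x * Real.sin θ))
        - ∫ θ in (0:ℝ)..(2*Real.pi), Real.cos ((q+1 : ℤ) * θ - x * Real.sin θ)) / 2 := by
    rw [← intervalIntegral.integral_sub ((besselJ_cont_aux (q-1) x).intervalIntegrable 0 (2*Real.pi))
      ((besselJ_cont_aux (q+1) x).intervalIntegrable 0 (2*Real.pi)),
      ← intervalIntegral.integral_div]
    refine intervalIntegral.integral_congr (fun θ _ => ?_)
    have e1 : ((q-1 : ℤ) : ℝ) * θ - x * Real.sin θ = ((q:ℝ) * θ - x * Real.sin θ) - θ := by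
      push_cast; ring
    have e2 : ((q+1 : ℤ) : ℝ) * θ - x * Real.sin θ = ((q:ℝ) * θ - x * Real.sin θ) + θ := by
      push_cast; ring
    rw [e1, e2, Real.cos_sub, Real.cos_add]; ring
  have h2 := key.const_mul (1/(2*Real.pi))
  rw [hsplit] at h2
  have h3 : (besselJ (q-1) x - besselJ (q+1) x) / 2
      = 1/(2*Real.pi) * (((∫ θ in (0:ℝ)..(2*Real.pi), Real.cos ((q-1 : ℤ) * θ - x * Real.sin θ))
        - ∫ θ in (0:ℝ)..(2*Real.pi), Real.cos ((q+1 : ℤ) * θ - x * Real.sin θ)) / 2) := by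
    unfold besselJ; ring
  rw [h3]; exact h2

lemma besselJ_cont (q : ℤ) : Continuous (besselJ q) :=
  continuous_iff_continuousAt.2 (fun x => (besselJ_hasDerivAt q x).differentiableAt.continuousAt)

lemma besselJ_rec (q : ℤ) (x : ℝ) :
    2 * (q:ℝ) * besselJ q x = x * (besselJ (q-1) x + besselJ (q+1) x) := by
  have key : (∫ θ in (0:ℝ)..(2*Real.pi),
      (((q:ℝ) - x * Real.cos θ) * Real.cos ((q:ℝ) * θ - x * Real.sin θ))) = 0 := by
    have hd : ∀ θ ∈ Set.uIcc (0:ℝ) (2*Real.pi),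
        HasDerivAt (fun θ : ℝ => Real.sin ((q:ℝ) * θ - x * Real.sin θ))
          (((q:ℝ) - x * Real.cos θ) * Real.cos ((q:ℝ) * θ - x * Real.sin θ)) θ := by
      intro θ _
      have h1 : HasDerivAt (fun θ : ℝ => (q:ℝ) * θ - x * Real.sin θ)
          ((q:ℝ) - x * Real.cos θ) θ := by
        exact (((hasDerivAt_id θ).const_mul (q:ℝ)).sub ((Real.hasDerivAt_sin θ).const_mul x)).congr_deriv (by simp)
      simpa [mul_comm] using h1.sin
    rw [intervalIntegral.integral_eq_sub_of_hasDerivAt hd (Continuous.intervalIntegrable (by fun_prop) _ _)]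
    have : (q:ℝ) * (2*Real.pi) - x * Real.sin (2*Real.pi) = (2*q : ℤ) * Real.pi := by
      push_cast
      rw [Real.sin_two_pi]; ring
    rw [this, Real.sin_int_mul_pi]
    simp
  have hsplit : ∀ θ : ℝ, ((q:ℝ) - x * Real.cos θ) * Real.cos ((q:ℝ) * θ - x * Real.sin θ)
      = (q:ℝ) * Real.cos ((q:ℝ) * θ - x * Real.sin θ)
        - x * ((Real.cos ((q-1 : ℤ) * θ - x * Real.sin θ) + Real.cos ((q+1 : ℤ) * θ - x * Real.sin θ)) / 2) := by
    intro θ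
    obtain ⟨A, hA⟩ : ∃ A, (q:ℝ) * θ - x * Real.sin θ = A := ⟨_, rfl⟩
    have e1 : ((q-1 : ℤ) : ℝ) * θ - x * Real.sin θ = A - θ := by
      rw [← hA]; push_cast; ring
    have e2 : ((q+1 : ℤ) : ℝ) * θ - x * Real.sin θ = A + θ := by
      rw [← hA]; push_cast; ring
    rw [e1, e2, hA, Real.cos_sub, Real.cos_add]; ring
  rw [intervalIntegral.integral_congr (g := fun θ => (q:ℝ) * Real.cos ((q:ℝ) * θ - x * Real.sin θ)
        - x * ((Real.cos ((q-1 : ℤ) * θ - x * Real.sin θ) + Real.cos ((q+1 : ℤ) * θ - x * Real.sin θ)) / 2))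
      (fun θ _ => hsplit θ)] at key
  rw [intervalIntegral.integral_sub, intervalIntegral.integral_const_mul, intervalIntegral.integral_const_mul,
    intervalIntegral.integral_div, intervalIntegral.integral_add] at key
  · unfold besselJ
    have hπ : Real.pi ≠ 0 := Real.pi_ne_zero
    field_simp at key ⊢
    linarith [key]
  · exact (besselJ_cont_aux (q-1) x).intervalIntegrable 0 (2*Real.pi)
  · exact (besselJ_cont_aux (q+1) x).intervalIntegrable 0 (2*Real.pi)
  · exact (Continuous.intervalIntegrable (by fun_prop) _ _)
  · exact (Continuous.intervalIntegrable (by fun_prop) _ _)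

lemma besselJ_neg (q : ℕ) (x : ℝ) : besselJ (-(q:ℤ)) x = (-1 : ℝ)^q * besselJ q x := by
  unfold besselJ
  have step1 : (∫ θ in (0:ℝ)..(2*Real.pi), Real.cos ((-(q:ℤ) : ℤ) * θ - x * Real.sin θ))
      = ∫ θ in (0:ℝ)..(2*Real.pi), Real.cos ((q:ℝ) * θ + x * Real.sin θ) := by
    have hflip := intervalIntegral.integral_comp_sub_left (a := 0) (b := 2*Real.pi)
      (fun θ => Real.cos ((-(q:ℤ) : ℤ) * θ - x * Real.sin θ)) (2*Real.pi)
    rw [sub_self, sub_zero] at hflip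
    rw [← hflip]
    refine intervalIntegral.integral_congr (fun θ _ => ?_)
    show Real.cos (((-(q:ℤ) : ℤ) : ℝ) * (2*Real.pi - θ) - x * Real.sin (2*Real.pi - θ)) = _
    have : ((-(q:ℤ) : ℤ) : ℝ) * (2*Real.pi - θ) - x * Real.sin (2*Real.pi - θ)
        = ((q:ℝ) * θ + x * Real.sin θ) - (q:ℤ) * (2*Real.pi) := by
      rw [Real.sin_sub, Real.sin_two_pi, Real.cos_two_pi]
      push_cast; ring
    rw [this]
    have : ((q:ℤ) : ℝ) * (2*Real.pi) = (q:ℝ) * (2*Real.pi) := by push_cast; ring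
    rw [this, Real.cos_sub_nat_mul_two_pi]
  have per : Function.Periodic (fun θ => Real.cos ((q:ℝ) * θ + x * Real.sin θ)) (2*Real.pi) := by
    intro θ
    simp only
    rw [Real.sin_add_two_pi, mul_add]
    have : (q:ℝ) * θ + (q:ℝ) * (2*Real.pi) + x * Real.sin θ
        = ((q:ℝ) * θ + x * Real.sin θ) + (q:ℝ) * (2*Real.pi) := by ring
    rw [this, Real.cos_add_nat_mul_two_pi]
  have step2 : (∫ θ in (0:ℝ)..(2*Real.pi), Real.cos ((q:ℝ) * θ + x * Real.sin θ))
      = ∫ θ in (0:ℝ)..(2*Real.pi), Real.cos ((q:ℝ) * (θ + Real.pi) + x * Real.sin (θ + Real.pi)) := by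
    rw [intervalIntegral.integral_comp_add_right
      (fun θ => Real.cos ((q:ℝ) * θ + x * Real.sin θ)) Real.pi]
    have h := per.intervalIntegral_add_eq Real.pi 0
    rw [show (0:ℝ)+Real.pi = Real.pi by ring, show 2*Real.pi+Real.pi = Real.pi+2*Real.pi by ring, h, zero_add]
  have step3 : ∀ θ : ℝ, Real.cos ((q:ℝ) * (θ + Real.pi) + x * Real.sin (θ + Real.pi))
      = (-1:ℝ)^q * Real.cos ((q:ℝ) * θ - x * Real.sin θ) := by
    intro θ
    rw [Real.sin_add_pi]
    have : (q:ℝ) * (θ + Real.pi) + x * -Real.sin θ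
        = ((q:ℝ) * θ - x * Real.sin θ) + q * Real.pi := by ring
    rw [this, Real.cos_add_nat_mul_pi]
  rw [step1, step2, intervalIntegral.integral_congr (fun θ _ => step3 θ),
    intervalIntegral.integral_const_mul]
  push_cast
  ring

lemma besselJ_pow_hasDerivAt (μ : ℕ) (x : ℝ) :
    HasDerivAt (fun y => besselJ ((μ:ℤ)+1) y * y^(μ+1)) (besselJ (μ:ℤ) x * x^(μ+1)) x := by
  have h1 := (besselJ_hasDerivAt ((μ:ℤ)+1) x).mul (hasDerivAt_pow (μ+1) x)
  rw [show ((μ:ℤ)+1-1) = (μ:ℤ) by ring, show ((μ:ℤ)+1+1) = (μ:ℤ)+2 by ring] at h1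
  have hrec := besselJ_rec ((μ:ℤ)+1) x
  rw [show ((μ:ℤ)+1-1) = (μ:ℤ) by ring, show ((μ:ℤ)+1+1) = (μ:ℤ)+2 by ring] at hrec
  refine h1.congr_deriv ?_
  simp only [Nat.add_sub_cancel, Nat.cast_add, Nat.cast_one]
  push_cast at hrec ⊢
  linear_combination (x^μ/2) * hrec

lemma besselJ_pow_hasDerivAt' (μ : ℕ) {x : ℝ} (hx : x ≠ 0) (r : ℝ) :
    HasDerivAt (fun r => besselJ ((μ:ℤ)+1) (x*r) * r^(μ+1))
      (x * besselJ (μ:ℤ) (x*r) * r^(μ+1)) r := by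
  have hc : HasDerivAt (fun y : ℝ => x * y) x r := by
    simpa using (hasDerivAt_id r).const_mul x
  have hcomp := (besselJ_pow_hasDerivAt μ (x*r)).comp r hc
  have h2 := hcomp.div_const (x^(μ+1))
  have heq : (fun y : ℝ => ((fun y => besselJ ((μ:ℤ)+1) y * y^(μ+1)) ∘ (fun y : ℝ => x * y)) y / x^(μ+1))
      = fun r : ℝ => besselJ ((μ:ℤ)+1) (x*r) * r^(μ+1) := by
    funext y
    simp only [Function.comp_apply, mul_pow]
    field_simp
  rw [heq] at h2
  refine h2.congr_deriv ?_
  rw [mul_pow]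
  field_simp

noncomputable def Mom (x : ℝ) (μ k : ℕ) : ℝ := ∫ r in (0:ℝ)..1, r^(μ+2*k+1) * besselJ (μ:ℤ) (x*r)

lemma Mom_zero {x : ℝ} (hx : x ≠ 0) (μ : ℕ) : Mom x μ 0 = besselJ ((μ:ℤ)+1) x / x := by
  have hftc : (∫ r in (0:ℝ)..1, x * besselJ (μ:ℤ) (x*r) * r^(μ+1))
      = besselJ ((μ:ℤ)+1) (x*1) * 1^(μ+1) - besselJ ((μ:ℤ)+1) (x*0) * 0^(μ+1) := by
    apply intervalIntegral.integral_eq_sub_of_hasDerivAt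
      (fun r _ => besselJ_pow_hasDerivAt' μ hx r)
    exact Continuous.intervalIntegrable (by
      have := besselJ_cont (μ:ℤ)
      fun_prop) _ _
  simp only [mul_one, one_pow, mul_zero, pow_succ, zero_mul, mul_zero, sub_zero] at hftc
  unfold Mom
  rw [eq_div_iff hx, mul_comm, ← hftc, ← intervalIntegral.integral_const_mul]
  refine intervalIntegral.integral_congr (fun r _ => ?_)
  simp only [mul_zero, add_zero]
  ring

lemma Mom_succ {x : ℝ} (hx : x ≠ 0) (μ k : ℕ) :
    Mom x μ (k+1) = besselJ ((μ:ℤ)+1) x / x - (2*(k+1)/x) * Mom x (μ+1) k := by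
  have hparts := intervalIntegral.integral_mul_deriv_eq_deriv_mul
    (u := fun r : ℝ => r^(2*(k+1))) (u' := fun r : ℝ => (2*(k+1)) * r^(2*k+1))
    (v := fun r : ℝ => besselJ ((μ:ℤ)+1) (x*r) * r^(μ+1))
    (v' := fun r : ℝ => x * besselJ (μ:ℤ) (x*r) * r^(μ+1))
    (a := 0) (b := 1)
    (fun r _ => by
      have := hasDerivAt_pow (2*(k+1)) r
      rw [show 2*(k+1)-1 = 2*k+1 by omega] at this
      norm_num at this ⊢
      convert this using 2 <;> push_cast <;> ring)
    (fun r _ => besselJ_pow_hasDerivAt' μ hx r)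
    (Continuous.intervalIntegrable (by fun_prop) _ _)
    (Continuous.intervalIntegrable (by
      have := besselJ_cont (μ:ℤ)
      fun_prop) _ _)
  have e1 : (∫ r in (0:ℝ)..1, r^(2*(k+1)) * (x * besselJ (μ:ℤ) (x*r) * r^(μ+1)))
      = x * Mom x μ (k+1) := by
    unfold Mom
    rw [← intervalIntegral.integral_const_mul]
    exact intervalIntegral.integral_congr (fun r _ => by ring)
  have e2 : (∫ r in (0:ℝ)..1, (2*(k+1) : ℝ) * r^(2*k+1) * (besselJ ((μ:ℤ)+1) (x*r) * r^(μ+1)))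
      = (2*(k+1)) * Mom x (μ+1) k := by
    unfold Mom
    rw [← intervalIntegral.integral_const_mul]
    refine intervalIntegral.integral_congr (fun r _ => ?_)
    push_cast
    ring
  rw [e1, e2] at hparts
  simp only [one_pow, mul_one, ne_eq, OfNat.ofNat_ne_zero, not_false_eq_true, zero_pow, zero_mul,
    mul_zero, sub_zero, pow_succ] at hparts
  rw [show ((μ:ℤ)+1) = (((μ+1:ℕ)):ℤ) by push_cast; ring] at hparts
  field_simp at hparts ⊢
  push_cast at hparts ⊢
  linarith [hparts]

noncomputable def Cc (μ s j : ℕ) : ℝ :=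
  (-1 : ℝ) ^ j * (Nat.factorial (μ + 2*s - j) : ℝ) /
    ((Nat.factorial j : ℝ) * (Nat.factorial (μ + s - j) : ℝ) * (Nat.factorial (s - j) : ℝ))

lemma tele (b S : ℕ) :
    ∑ i ∈ range (S+1), (-1:ℝ)^i * (b + 2*i + 1) * (Nat.factorial (b+i)) / (Nat.factorial i)
      = (-1:ℝ)^S * (Nat.factorial (b+S+1)) / (Nat.factorial S) := by
  induction S with
  | zero => simp [Nat.factorial_succ]
  | succ S ih =>
    rw [Finset.sum_range_succ, ih]
    have h1 : Nat.factorial (b+(S+1)+1) = (b+S+2) * Nat.factorial (b+S+1) := by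
      rw [show b+(S+1)+1 = (b+S+1)+1 by ring, Nat.factorial_succ]
    have h2 : Nat.factorial (b+(S+1)) = (b+S+1) * Nat.factorial (b+S) := by
      rw [show b+(S+1) = (b+S)+1 by ring, Nat.factorial_succ]
    have h3 : Nat.factorial (S+1) = (S+1) * Nat.factorial S := Nat.factorial_succ S
    have hb1 : Nat.factorial (b+S+1) = (b+S+1) * Nat.factorial (b+S) := Nat.factorial_succ _
    rw [h1, h3, hb1, h2]
    have hS : (Nat.factorial S : ℝ) ≠ 0 := Nat.cast_ne_zero.2 (Nat.factorial_ne_zero S)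
    have hbS : (Nat.factorial (b+S) : ℝ) ≠ 0 := Nat.cast_ne_zero.2 (Nat.factorial_ne_zero _)
    field_simp
    push_cast
    ring

lemma vdm : ∀ (p q s : ℕ), p + s ≤ q →
    (∑ j ∈ range (s+1), (-1:ℝ)^j * (Nat.choose p j) * (Nat.choose (q-j) (s-j)))
      = Nat.choose (q-p) s := by
  intro p
  induction p with
  | zero =>
    intro q s _
    rw [Finset.sum_eq_single 0]
    · simp
    · intro j _ hj
      rw [Nat.choose_eq_zero_of_lt (by omega)]
      simp
    · simp
  | succ p ih =>
    intro q s hq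
    rcases Nat.eq_zero_or_pos s with hs | hs
    · subst hs; simp
    obtain ⟨t, rfl⟩ : ∃ t, s = t + 1 := ⟨s - 1, by omega⟩
    rw [Finset.sum_range_succ']
    have hsplit : ∀ i ∈ range (t+1),
        (-1:ℝ)^(i+1) * (Nat.choose (p+1) (i+1)) * (Nat.choose (q-(i+1)) ((t+1)-(i+1)))
        = (-1:ℝ)^(i+1) * (Nat.choose p (i+1)) * (Nat.choose (q-(i+1)) ((t+1)-(i+1)))
          - (-1:ℝ)^i * (Nat.choose p i) * (Nat.choose ((q-1)-i) (t-i)) := by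
      intro i _
      rw [Nat.choose_succ_succ p i,
        show q-(i+1) = (q-1)-i by omega, show (t+1)-(i+1) = t-i by omega]
      push_cast
      ring
    have hB := ih q (t+1) (by omega)
    have hC := ih (q-1) t (by omega)
    have hpas : Nat.choose (q-p) (t+1) = Nat.choose (q-(p+1)) t + Nat.choose (q-(p+1)) (t+1) := by
      rw [show q-p = (q-(p+1))+1 by omega, Nat.choose_succ_succ]
    have hcast : ((Nat.choose (q-p) (t+1)) : ℝ)
        = (Nat.choose (q-(p+1)) t : ℝ) + (Nat.choose (q-(p+1)) (t+1) : ℝ) := by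
      rw [hpas]; push_cast; ring
    have hA := Finset.sum_range_succ'
      (fun j => (-1:ℝ)^j * (Nat.choose p j) * (Nat.choose (q-j) ((t+1)-j))) (t+1)
    rw [hB] at hA
    rw [Finset.sum_congr rfl hsplit, Finset.sum_sub_distrib, hC,
      show (q-1)-p = q-(p+1) by omega]
    simp only [Nat.choose_zero_right, pow_zero, Nat.sub_zero, one_mul, Nat.cast_one] at hA ⊢
    linear_combination -hA + hcast

lemma fact_ne (n : ℕ) : (Nat.factorial n : ℝ) ≠ 0 := Nat.cast_ne_zero.2 (Nat.factorial_ne_zero n)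

lemma sum_Cc (μ s : ℕ) : ∑ j ∈ range (s+1), Cc μ s j = 1 := by
  have hterm : ∀ j ∈ range (s+1), Cc μ s j
      = (-1:ℝ)^j * (Nat.choose (μ+s) j) * (Nat.choose (μ+2*s-j) (s-j)) := by
    intro j hj
    have hj' : j ≤ s := by simpa using Nat.lt_succ_iff.1 (Finset.mem_range.1 hj)
    rw [Nat.cast_choose ℝ (by omega : j ≤ μ+s), Nat.cast_choose ℝ (by omega : s-j ≤ μ+2*s-j),
      show (μ+2*s-j)-(s-j) = μ+s by omega]
    unfold Cc
    field_simp [fact_ne]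
  rw [Finset.sum_congr rfl hterm, vdm (μ+s) (μ+2*s) s (by omega),
    show μ+2*s-(μ+s) = s by omega, Nat.choose_self, Nat.cast_one]

lemma star (μ s k : ℕ) (hk : k < s) :
    ((k:ℝ)+1) * Cc μ s (s-1-k) = ∑ i ∈ range (s-k), ((μ:ℝ)+2*(k+i)+2) * Cc (μ+1) (k+i) i := by
  obtain ⟨S, rfl⟩ : ∃ S, s = S + k + 1 := ⟨s-k-1, by omega⟩
  rw [show (S+k+1)-1-k = S by omega, show (S+k+1)-k = S+1 by omega]
  have hterm : ∀ i ∈ range (S+1), ((μ:ℝ)+2*(k+i)+2) * Cc (μ+1) (k+i) i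
      = ((-1:ℝ)^i * ((μ+2*k+1 : ℕ) + 2*i + 1) * (Nat.factorial ((μ+2*k+1)+i)) / (Nat.factorial i))
        * (1 / ((Nat.factorial (μ+k+1) : ℝ) * (Nat.factorial k : ℝ))) := by
    intro i _
    unfold Cc
    rw [show (μ+1) + 2*(k+i) - i = (μ+2*k+1)+i by omega,
      show (μ+1) + (k+i) - i = μ+k+1 by omega,
      show (k+i) - i = k by omega]
    push_cast
    field_simp [fact_ne]
    ring
  rw [Finset.sum_congr rfl hterm, ← Finset.sum_mul, tele (μ+2*k+1) S]
  unfold Cc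
  rw [show μ + 2*(S+k+1) - S = (μ+2*k+1)+S+1 by omega,
    show μ + (S+k+1) - S = μ+k+1 by omega,
    show (S+k+1) - S = k+1 by omega,
    Nat.factorial_succ k]
  push_cast
  field_simp [fact_ne]

lemma tri_swap (s : ℕ) (H : ℕ → ℕ → ℝ) :
    ∑ k ∈ range s, ∑ i ∈ range (s-k), H (k+i) i
      = ∑ p ∈ range s, ∑ j ∈ range (p+1), H p j := by
  rw [Finset.sum_sigma', Finset.sum_sigma']
  refine Finset.sum_nbij' (fun q => ⟨q.1 + q.2, q.2⟩) (fun q => ⟨q.1 - q.2, q.2⟩) ?_ ?_ ?_ ?_ ?_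
  · rintro ⟨k, i⟩ hm
    simp only [Finset.mem_sigma, Finset.mem_range] at hm ⊢
    omega
  · rintro ⟨p, j⟩ hm
    simp only [Finset.mem_sigma, Finset.mem_range] at hm ⊢
    omega
  · rintro ⟨k, i⟩ hm
    simp only [Finset.mem_sigma, Finset.mem_range] at hm
    simp only [Sigma.mk.inj_iff]
    constructor
    · omega
    · exact HEq.rfl
  · rintro ⟨p, j⟩ hm
    simp only [Finset.mem_sigma, Finset.mem_range] at hm
    simp only [Sigma.mk.inj_iff]
    constructor
    · omega
    · exact HEq.rfl
  · rintro ⟨k, i⟩ _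
    rfl

lemma tele2 (g : ℕ → ℝ) (s : ℕ) :
    ∑ i ∈ range s, (-1:ℝ)^i * (g i + g (i+1)) = g 0 - (-1:ℝ)^s * g s := by
  induction s with
  | zero => simp
  | succ s ih => rw [Finset.sum_range_succ, ih]; ring

lemma Mom_rec {x : ℝ} (hx : x ≠ 0) (μ k : ℕ) :
    Mom x μ k = besselJ ((μ:ℤ)+1) x / x - (2*(k:ℝ)/x) * Mom x (μ+1) (k-1) := by
  cases k with
  | zero => simp [Mom_zero hx μ]
  | succ k =>
    rw [Mom_succ hx μ k, Nat.add_sub_cancel]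
    push_cast
    ring

lemma coreM : ∀ (s μ : ℕ) {x : ℝ}, x ≠ 0 →
    ∑ j ∈ range (s+1), Cc μ s j * Mom x μ (s-j)
      = (-1:ℝ)^s * besselJ ((μ:ℤ)+2*s+1) x / x := by
  intro s
  induction s using Nat.strong_induction_on with
  | _ s ih =>
  intro μ x hx
  set g : ℕ → ℝ := fun p => besselJ ((μ:ℤ)+2*p+1) x with hg
  -- step 1 : expand Mom via Mom_rec
  have step1 : ∀ j ∈ range (s+1), Cc μ s j * Mom x μ (s-j)
      = Cc μ s j * (besselJ ((μ:ℤ)+1) x / x)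
        - (2/x) * (((s-j : ℕ):ℝ) * Cc μ s j * Mom x (μ+1) (s-1-j)) := by
    intro j hj
    rw [Mom_rec hx μ (s-j), show s-j-1 = s-1-j by omega]
    ring
  rw [Finset.sum_congr rfl step1, Finset.sum_sub_distrib, ← Finset.sum_mul, sum_Cc,
    ← Finset.mul_sum]
  -- step 2 : last term of the second sum vanishes
  have step2 : ∑ j ∈ range (s+1), ((s-j : ℕ):ℝ) * Cc μ s j * Mom x (μ+1) (s-1-j)
      = ∑ j ∈ range s, ((s-j : ℕ):ℝ) * Cc μ s j * Mom x (μ+1) (s-1-j) := by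
    rw [Finset.sum_range_succ, Nat.sub_self]
    simp
  rw [step2]
  -- step 3 : reflect the sum
  have step3 : ∑ j ∈ range s, ((s-j : ℕ):ℝ) * Cc μ s j * Mom x (μ+1) (s-1-j)
      = ∑ k ∈ range s, ((k:ℝ)+1) * Cc μ s (s-1-k) * Mom x (μ+1) k := by
    rw [← Finset.sum_range_reflect (fun k => ((k:ℝ)+1) * Cc μ s (s-1-k) * Mom x (μ+1) k) s]
    refine Finset.sum_congr rfl (fun j hj => ?_)
    have hj' : j < s := Finset.mem_range.1 hj
    rw [show s-1-(s-1-j) = j by omega, show s-j = (s-1-j)+1 by omega]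
    push_cast
    ring
  rw [step3]
  -- step 4 : apply star and swap sums
  have h1 : ∀ k ∈ range s, ((k:ℝ)+1) * Cc μ s (s-1-k) * Mom x (μ+1) k
      = ∑ i ∈ range (s-k),
          (fun (p j : ℕ) => ((μ:ℝ)+2*(p:ℝ)+2) * Cc (μ+1) p j * Mom x (μ+1) (p-j)) (k+i) i := by
    intro k hk
    rw [star μ s k (Finset.mem_range.1 hk), Finset.sum_mul]
    refine Finset.sum_congr rfl (fun i _ => ?_)
    simp only
    rw [show (k+i)-i = k by omega]
    push_cast
    ring
  rw [Finset.sum_congr rfl h1,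
    tri_swap s (fun (p j : ℕ) => ((μ:ℝ)+2*(p:ℝ)+2) * Cc (μ+1) p j * Mom x (μ+1) (p-j))]
  -- step 5 : use the induction hypothesis
  have h2 : ∀ p ∈ range s, ∑ j ∈ range (p+1),
        (fun (p j : ℕ) => ((μ:ℝ)+2*(p:ℝ)+2) * Cc (μ+1) p j * Mom x (μ+1) (p-j)) p j
      = (-1:ℝ)^p * (g p + g (p+1)) / 2 := by
    intro p hp
    simp only
    rw [Finset.sum_congr rfl (fun j _ => mul_assoc ((μ:ℝ)+2*(p:ℝ)+2) (Cc (μ+1) p j) (Mom x (μ+1) (p-j))), ← Finset.mul_sum, ih p (Finset.mem_range.1 hp) (μ+1) hx]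
    have hrec := besselJ_rec ((μ:ℤ)+2*(p:ℤ)+2) x
    rw [show (μ:ℤ)+2*(p:ℤ)+2-1 = (μ:ℤ)+2*(p:ℤ)+1 by ring] at hrec
    have e1 : ((μ+1:ℕ):ℤ)+2*(p:ℤ)+1 = (μ:ℤ)+2*(p:ℤ)+2 := by push_cast; ring
    have e2 : (μ:ℤ)+2*(p:ℤ)+2+1 = (μ:ℤ)+2*((p+1:ℕ):ℤ)+1 := by push_cast; ring
    rw [e2] at hrec
    rw [e1, hg]
    simp only
    field_simp
    push_cast at hrec ⊢
    linear_combination hrec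
  rw [Finset.sum_congr rfl h2]
  -- step 6 : telescope
  have h3 : ∀ p ∈ range s, (-1:ℝ)^p * (g p + g (p+1)) / 2
      = ((-1:ℝ)^p * (g p + g (p+1))) * (1/2) := fun p _ => by ring
  rw [Finset.sum_congr rfl h3, ← Finset.sum_mul, tele2 g s]
  have hg0 : g 0 = besselJ ((μ:ℤ)+1) x := by
    rw [hg]; norm_num
  have hgs : g s = besselJ ((μ:ℤ)+2*(s:ℤ)+1) x := rfl
  rw [hg0, hgs]
  field_simp
  ring

lemma core (s μ : ℕ) {x : ℝ} (hx : x ≠ 0) :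
    (∫ r in (0:ℝ)..1, (∑ j ∈ range (s+1), Cc μ s j * r^(μ+2*(s-j))) * besselJ (μ:ℤ) (x*r) * r)
      = (-1:ℝ)^s * besselJ ((μ:ℤ)+2*s+1) x / x := by
  have hcong : ∀ r ∈ Set.uIcc (0:ℝ) 1,
      (∑ j ∈ range (s+1), Cc μ s j * r^(μ+2*(s-j))) * besselJ (μ:ℤ) (x*r) * r
      = ∑ j ∈ range (s+1), (fun (j : ℕ) (r : ℝ) => Cc μ s j * (r^(μ+2*(s-j)+1) * besselJ (μ:ℤ) (x*r))) j r := by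
    intro r _
    rw [Finset.sum_mul, Finset.sum_mul]
    refine Finset.sum_congr rfl (fun j _ => ?_)
    show _ = Cc μ s j * (r^(μ+2*(s-j)+1) * besselJ (μ:ℤ) (x*r))
    rw [pow_succ]
    ring
  rw [intervalIntegral.integral_congr hcong, intervalIntegral.integral_finset_sum]
  · have : ∀ j ∈ range (s+1),
        (∫ r in (0:ℝ)..1, Cc μ s j * (r^(μ+2*(s-j)+1) * besselJ (μ:ℤ) (x*r)))
        = Cc μ s j * Mom x μ (s-j) := by
      intro j _
      rw [intervalIntegral.integral_const_mul]
      rfl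
    rw [Finset.sum_congr rfl this, coreM s μ hx]
  · intro j _
    have := besselJ_cont (μ:ℤ)
    exact Continuous.intervalIntegrable (by fun_prop) _ _

theorem zernike_bessel_integral_scaled (a : ℝ) (ha : 0 < a) (m : ℤ) (n : ℕ)
    (h₁ : m.natAbs ≤ n) (h₂ : (n - m.natAbs) % 2 = 0) (α : ℝ) (hα : α ≠ 0) :
    ∫ r in (0:ℝ)..a, Zern n m (r / a) * besselJ m (α * r) * r
      = a * (-1 : ℝ) ^ (((n : ℤ) - m) / 2) * besselJ ((n : ℤ) + 1) (a * α) / α := by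
  set μ := m.natAbs with hμ
  set s := (n - μ)/2 with hs
  have hn : n = μ + 2*s := by omega
  have ha' : a ≠ 0 := ne_of_gt ha
  have hx : a * α ≠ 0 := mul_ne_zero ha' hα
  -- Zern in terms of Cc
  have hZ : ∀ r : ℝ, Zern n m r = ∑ j ∈ range (s+1), Cc μ s j * r^(μ+2*(s-j)) := by
    intro r
    unfold Zern
    rw [show (n - m.natAbs)/2 = s from rfl]
    refine Finset.sum_congr rfl (fun j hj => ?_)
    have hj' : j ≤ s := by have := Finset.mem_range.1 hj; omega
    unfold Cc
    rw [show n - j = μ + 2*s - j by omega, show (n + m.natAbs)/2 = μ + s by omega,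
      show n - 2*j = μ + 2*(s-j) by omega]
  -- substitution r = a u
  have hsub : (∫ r in (0:ℝ)..a, Zern n m (r / a) * besselJ m (α * r) * r)
      = a * ∫ u in (0:ℝ)..1, Zern n m u * besselJ m ((a*α) * u) * (a * u) := by
    have := intervalIntegral.smul_integral_comp_mul_left
      (f := fun r => Zern n m (r / a) * besselJ m (α * r) * r) (a := 0) (b := 1) a
    rw [mul_zero, mul_one] at this
    rw [← this, smul_eq_mul]
    congr 1
    refine intervalIntegral.integral_congr (fun u _ => ?_)
    rw [mul_div_cancel_left₀ u ha', show α * (a * u) = (a*α) * u by ring]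
  rw [hsub]
  -- pull out a and the sign of m
  rcases le_or_gt 0 m with hm | hm
  · have hmμ : m = (μ:ℤ) := by omega
    have hdiv : ((n : ℤ) - m) / 2 = (s : ℤ) := by omega
    have hind : (n : ℤ) + 1 = (μ:ℤ) + 2*s + 1 := by omega
    have hmain : (∫ u in (0:ℝ)..1, Zern n m u * besselJ m ((a*α) * u) * (a * u))
        = a * ((-1:ℝ)^s * besselJ ((μ:ℤ)+2*s+1) (a*α) / (a*α)) := by
      rw [← core s μ hx, ← intervalIntegral.integral_const_mul]
      refine intervalIntegral.integral_congr (fun u _ => ?_)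
      rw [hZ u, hmμ]
      ring
    rw [hmain, hdiv, hind, zpow_natCast]
    field_simp
  · have hmμ : m = -(μ:ℤ) := by omega
    have hdiv : ((n : ℤ) - m) / 2 = (μ:ℤ) + (s:ℤ) := by omega
    have hind : (n : ℤ) + 1 = (μ:ℤ) + 2*s + 1 := by omega
    have hmain : (∫ u in (0:ℝ)..1, Zern n m u * besselJ m ((a*α) * u) * (a * u))
        = (-1:ℝ)^μ * (a * ((-1:ℝ)^s * besselJ ((μ:ℤ)+2*s+1) (a*α) / (a*α))) := by
      rw [← core s μ hx, ← intervalIntegral.integral_const_mul,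
        ← intervalIntegral.integral_const_mul]
      refine intervalIntegral.integral_congr (fun u _ => ?_)
      rw [hZ u, hmμ, besselJ_neg μ ((a*α)*u)]
      ring
    rw [hmain, hdiv, hind]
    rw [show ((μ:ℤ) + (s:ℤ)) = ((μ + s : ℕ) : ℤ) by push_cast; ring, zpow_natCast, pow_add]
    field_simp
end
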